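/- For every n ≥ 1, there exists an NFA with exactly n + 2 states over the alphabet Σ_n = {1, 2, …, n} that accepts the language M''_n. -/

import Mathlib

/-- The language `M''_n` over a linearly ordered alphabet: all words containing two
occurrences of some letter `i` with only letters strictly smaller than `i`
in between. -/
def Mpp {α : Type*} [LT α] : Set (List α) :=
  { u | ∃ (x y z : List α) (i : α), u = x ++ i :: (y ++ i :: z) ∧ ∀ c ∈ y, c < i }

namespace Stmt9Aux

variable {n : ℕ}

/-- State corresponding to letter `i`. -/
def st (i : Fin n) : Fin (n + 2) := ⟨i.val + 1, by omega⟩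

/-- The final state. -/
def fs (n : ℕ) : Fin (n + 2) := ⟨n + 1, by omega⟩

/-- The start state. -/
def zs (n : ℕ) : Fin (n + 2) := ⟨0, by omega⟩

/-- The NFA. -/
def A (n : ℕ) : NFA (Fin n) (Fin (n + 2)) where
  step q c :=
    if q.val = 0 then {zs n, st c}
    else if q.val = n + 1 then {fs n}
    else if c.val + 1 = q.val then {fs n}
    else if c.val + 1 < q.val then {q}
    else ∅
  start := {zs n}
  accept := {fs n}

lemma st_ne_zs (i : Fin n) : st i ≠ zs n := by
  simp [st, zs, Fin.ext_iff]

lemma st_ne_fs (i : Fin n) : st i ≠ fs n := by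
  have := i.isLt
  simp [st, fs, Fin.ext_iff]; omega

lemma fs_ne_zs : fs n ≠ zs n := by simp [fs, zs, Fin.ext_iff]

lemma st_inj {i j : Fin n} (h : st i = st j) : i = j := by
  simpa [st, Fin.ext_iff] using h

lemma mem_step_iff (q r : Fin (n + 2)) (c : Fin n) :
    r ∈ (A n).step q c ↔
      (q = zs n ∧ (r = zs n ∨ r = st c)) ∨
      (q = fs n ∧ r = fs n) ∨
      (q = st c ∧ r = fs n) ∨
      (c.val + 1 < q.val ∧ q.val < n + 1 ∧ r = q) := by
  have hc := c.isLt
  show r ∈ (if q.val = 0 then ({zs n, st c} : Set (Fin (n+2)))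
      else if q.val = n + 1 then {fs n}
      else if c.val + 1 = q.val then {fs n}
      else if c.val + 1 < q.val then {q}
      else ∅) ↔ _
  split_ifs with h0 hf he hl <;>
    simp only [Set.mem_insert_iff, Set.mem_singleton_iff, Set.mem_empty_iff_false,
      zs, fs, st, Fin.ext_iff, false_iff, iff_false] <;> grind

lemma zs_mem_eval (w : List (Fin n)) : zs n ∈ (A n).eval w := by
  induction w using List.reverseRecOn with
  | nil => simp [NFA.eval, NFA.evalFrom, A]
  | append_singleton w a ih =>
      rw [NFA.eval_append_singleton, NFA.mem_stepSet]
      exact ⟨zs n, ih, by rw [mem_step_iff]; left; exact ⟨rfl, Or.inl rfl⟩⟩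

lemma st_mem_eval_iff (w : List (Fin n)) (i : Fin n) :
    st i ∈ (A n).eval w ↔ ∃ x y, w = x ++ i :: y ∧ ∀ c ∈ y, c < i := by
  induction w using List.reverseRecOn with
  | nil =>
      simp only [NFA.eval, NFA.evalFrom, List.foldl_nil]
      constructor
      · intro h
        exact absurd (by simpa [A] using h) (st_ne_zs i)
      · rintro ⟨x, y, h, -⟩
        exact absurd h (by simp)
  | append_singleton w a ih =>
      rw [NFA.eval_append_singleton, NFA.mem_stepSet]
      constructor
      · rintro ⟨q, hq, hs⟩
        rw [mem_step_iff] at hs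
        rcases hs with ⟨rfl, h | h⟩ | ⟨rfl, h⟩ | ⟨rfl, h⟩ | ⟨hlt, _, h⟩
        · exact absurd h (st_ne_zs i)
        · obtain rfl := st_inj h
          exact ⟨w, [], by simp⟩
        · exact absurd h (st_ne_fs i)
        · exact absurd h (st_ne_fs i)
        · -- q = st i, a < i
          subst h
          simp only [st] at hlt
          obtain ⟨x, y, rfl, hy⟩ := (ih).mp hq
          refine ⟨x, y ++ [a], by simp, ?_⟩
          intro c hc
          rcases List.mem_append.mp hc with hc | hc
          · exact hy c hc
          · simp only [List.mem_singleton] at hc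
            subst hc
            exact Fin.lt_def.mpr (by omega)
      · rintro ⟨x, y, h, hy⟩
        rcases List.eq_nil_or_concat y with rfl | ⟨y', b, rfl⟩
        · -- w ++ [a] = x ++ [i]
          obtain ⟨rfl, hab⟩ := List.append_inj' h rfl
          obtain rfl : a = i := by simpa using hab
          exact ⟨zs n, zs_mem_eval w, by rw [mem_step_iff]; left; exact ⟨rfl, Or.inr rfl⟩⟩
        · have h' : w ++ [a] = (x ++ i :: y') ++ [b] := by simp [h]
          obtain ⟨rfl, hab⟩ := List.append_inj' h' rfl
          obtain rfl : a = b := by simpa using hab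
          have hb : a < i := hy a (by simp)
          refine ⟨st i, ih.mpr ⟨x, y', rfl, fun c hc => hy c (by simp [hc])⟩, ?_⟩
          rw [mem_step_iff]
          right; right; right
          have := i.isLt
          exact ⟨by simp only [st]; omega, by simp only [st]; omega, rfl⟩

lemma mpp_append_singleton_iff (w : List (Fin n)) (a : Fin n) :
    (w ++ [a]) ∈ (Mpp : Set (List (Fin n))) ↔
      w ∈ (Mpp : Set (List (Fin n))) ∨ ∃ x y, w = x ++ a :: y ∧ ∀ c ∈ y, c < a := by
  constructor
  · rintro ⟨x, y, z, i, h, hy⟩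
    rcases List.eq_nil_or_concat z with rfl | ⟨z', b, rfl⟩
    · have h' : w ++ [a] = (x ++ i :: y) ++ [i] := by simp [h]
      obtain ⟨rfl, hab⟩ := List.append_inj' h' rfl
      obtain rfl : a = i := by simpa using hab
      exact Or.inr ⟨x, y, rfl, hy⟩
    · have h' : w ++ [a] = (x ++ i :: (y ++ i :: z')) ++ [b] := by simp [h]
      obtain ⟨rfl, hab⟩ := List.append_inj' h' rfl
      exact Or.inl ⟨x, y, z', i, rfl, hy⟩
  · rintro (⟨x, y, z, i, rfl, hy⟩ | ⟨x, y, rfl, hy⟩)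
    · exact ⟨x, y, z ++ [a], i, by simp, hy⟩
    · exact ⟨x, y, [], a, by simp, hy⟩

lemma fs_mem_eval_iff (w : List (Fin n)) :
    fs n ∈ (A n).eval w ↔ w ∈ (Mpp : Set (List (Fin n))) := by
  induction w using List.reverseRecOn with
  | nil =>
      simp only [NFA.eval, NFA.evalFrom, List.foldl_nil]
      constructor
      · intro h
        exact absurd (by simpa [A] using h) fs_ne_zs
      · rintro ⟨x, y, z, i, h, -⟩
        exact absurd h (by simp)
  | append_singleton w a ih =>
      rw [NFA.eval_append_singleton, NFA.mem_stepSet, mpp_append_singleton_iff, ← ih,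
        ← st_mem_eval_iff]
      constructor
      · rintro ⟨q, hq, hs⟩
        rw [mem_step_iff] at hs
        rcases hs with ⟨rfl, h | h⟩ | ⟨rfl, h⟩ | ⟨rfl, h⟩ | ⟨_, hlt, h⟩
        · simp [fs, zs, Fin.ext_iff] at h
        · have := a.isLt
          simp [fs, st, Fin.ext_iff] at h
          omega
        · exact Or.inl hq
        · exact Or.inr hq
        · subst h
          simp only [fs] at hlt
          omega
      · rintro (h | h)
        · exact ⟨fs n, h, by rw [mem_step_iff]; right; left; exact ⟨rfl, rfl⟩⟩
        · exact ⟨st a, h, by rw [mem_step_iff]; right; right; left; exact ⟨rfl, rfl⟩⟩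

end Stmt9Aux

/-- There is an NFA with exactly `n + 2` states (and a single start state) over the
`n`-letter ordered alphabet that accepts `M''_n`. -/
theorem stmt_9 (n : ℕ) (hn : 1 ≤ n) :
    ∃ (B : NFA (Fin n) (Fin (n + 2))) (q₀ : Fin (n + 2)),
      B.start = {q₀} ∧
        ∀ w : List (Fin n), w ∈ B.accepts ↔ w ∈ (Mpp : Set (List (Fin n))) := by
  refine ⟨Stmt9Aux.A n, Stmt9Aux.zs n, rfl, fun w => ?_⟩
  rw [NFA.mem_accepts]
  constructor
  · rintro ⟨q, hq, hw⟩
    have : q = Stmt9Aux.fs n := by simpa [Stmt9Aux.A] using hq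
    subst this
    exact (Stmt9Aux.fs_mem_eval_iff w).mp hw
  · intro h
    exact ⟨Stmt9Aux.fs n, by simp [Stmt9Aux.A], (Stmt9Aux.fs_mem_eval_iff w).mpr h⟩
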